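/- Let (T_n)_{n≥1} be a sequence of rooted phylogenetic trees with edge lengths, where T_n has taxon set X_n = {1,...,n}, cluster family E_n, edge lengths λ^{(n)} with λ_e^{(n)} ∈ [0,1] for all e, and survival probabilities p^{(n)}, and let φ_n be the future phylogenetic diversity under the g-FOB model. Assume (C1): there exist ε > 0, A ≥ 0 and α ≥ 0 such that for every n the number of indices i with p_i^{(n)} ∉ [ε, 1−ε] is at most A n^α; and (C2*): there exist B > 0 and β such that for every n, the sum over pendant edges e of (λ_e^{(n)})² is at least B n^β. Then for every n, Var[φ_n] ≥ ε² (B n^β − A n^α). -/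

import Mathlib

open MeasureTheory ProbabilityTheory Finset
open scoped Classical

section H
set_option linter.unusedSectionVars false
variable {Ω : Type*} [MeasurableSpace Ω] {μ : Measure Ω} [IsProbabilityMeasure μ]
variable {ι : Type*} {X : ι → Ω → Bool}

lemma aux_integrable_of_bdd {f : Ω → ℝ} (hm : Measurable f) (C : ℝ)
    (hb : ∀ ω, |f ω| ≤ C) : Integrable f μ :=
  (memLp_top_of_bound hm.aestronglyMeasurable C
    (Filter.Eventually.of_forall (by simpa [Real.norm_eq_abs] using hb))).integrable le_top

lemma aux_meas_sInd {i : ι} (hm : Measurable (X i)) :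
    Measurable (fun ω => if X i ω then (1:ℝ) else 0) :=
  (Measurable.of_discrete (f := fun b : Bool => if b then (1:ℝ) else 0)).comp hm

lemma aux_int_sInd {i : ι} (hm : Measurable (X i)) :
    ∫ ω, (if X i ω then (1:ℝ) else 0) ∂μ = (μ {ω | X i ω = true}).toReal := by
  have h1 : (fun ω => if X i ω then (1:ℝ) else 0)
      = fun ω => Set.indicator {ω | X i ω = true} (fun _ => (1:ℝ)) ω := by
    funext ω; by_cases h : X i ω <;> simp [Set.indicator_apply, h]
  have hS : MeasurableSet {ω | X i ω = true} := hm (measurableSet_singleton true)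
  rw [h1, integral_indicator_const (1:ℝ) hS]
  simp
  rfl

lemma aux_int_bool {i : ι} (hm : Measurable (X i)) (ψ : Bool → ℝ) :
    ∫ ω, ψ (X i ω) ∂μ
      = ψ false + (μ {ω | X i ω = true}).toReal * (ψ true - ψ false) := by
  have hpt : ∀ ω, ψ (X i ω)
      = ψ false + (ψ true - ψ false) * (if X i ω then 1 else 0) := by
    intro ω; cases h : X i ω <;> simp [h] <;> ring
  have hint : Integrable (fun ω => (if X i ω then (1:ℝ) else 0)) μ :=
    aux_integrable_of_bdd (aux_meas_sInd hm) 1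
      (fun ω => by by_cases h : X i ω <;> simp [h])
  simp_rw [hpt]
  rw [integral_add (integrable_const _) (hint.const_mul _), integral_const_mul,
    aux_int_sInd hm]
  simp [mul_comm]

lemma aux_meas_cInd (hm : ∀ i, Measurable (X i)) (c : Finset ι) :
    Measurable (fun ω => if ∃ i ∈ c, X i ω = true then (1:ℝ) else 0) := by
  have hS : MeasurableSet {ω | ∃ i ∈ c, X i ω = true} := by
    have : {ω | ∃ i ∈ c, X i ω = true} = ⋃ i ∈ c, (X i) ⁻¹' {true} := by
      ext ω; simp
    rw [this]
    exact MeasurableSet.biUnion c.countable_toSet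
      (fun i _ => hm i (measurableSet_singleton true))
  exact Measurable.ite hS measurable_const measurable_const

lemma aux_integrable_cInd (hm : ∀ i, Measurable (X i)) (c : Finset ι) :
    Integrable (fun ω => if ∃ i ∈ c, X i ω = true then (1:ℝ) else 0) μ :=
  aux_integrable_of_bdd (aux_meas_cInd hm c) 1
    (fun ω => by by_cases h : ∃ i ∈ c, X i ω = true <;> simp [h])

lemma aux_int_cInd_mem_Icc (hm : ∀ i, Measurable (X i)) (c : Finset ι) :
    (∫ ω, (if ∃ i ∈ c, X i ω = true then (1:ℝ) else 0) ∂μ) ∈ Set.Icc (0:ℝ) 1 := by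
  constructor
  · exact integral_nonneg (fun ω => by by_cases h : ∃ i ∈ c, X i ω = true <;> simp [h])
  · calc ∫ ω, (if ∃ i ∈ c, X i ω = true then (1:ℝ) else 0) ∂μ
        ≤ ∫ _ω, (1:ℝ) ∂μ := by
          refine integral_mono (aux_integrable_cInd hm c) (integrable_const _) ?_
          intro ω; by_cases h : ∃ i ∈ c, X i ω = true <;> simp [h]
    _ = 1 := by simp

lemma aux_indep_cInd (hm : ∀ i, Measurable (X i))
    (hind : iIndepFun X μ)
    {c : Finset ι} {i : ι} (hic : i ∉ c) (ψ : Bool → ℝ) :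
    IndepFun (fun ω => if ∃ j ∈ c, X j ω = true then (1:ℝ) else 0)
      (fun ω => ψ (X i ω)) μ := by
  have hdisj : Disjoint c ({i} : Finset ι) := by
    simp [Finset.disjoint_singleton_right, hic]
  have base := hind.indepFun_finset c {i} hdisj hm
  have hΦ : Measurable (fun v : ({x // x ∈ c} → Bool) =>
      if ∃ j : {x // x ∈ c}, v j = true then (1:ℝ) else 0) := Measurable.of_discrete
  have hΨ : Measurable (fun v : ({x // x ∈ ({i}:Finset ι)} → Bool) =>
      ψ (v ⟨i, Finset.mem_singleton_self i⟩)) := Measurable.of_discrete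
  have hcomp := base.comp hΦ hΨ
  have e1 : ((fun v : ({x // x ∈ c} → Bool) =>
      if ∃ j : {x // x ∈ c}, v j = true then (1:ℝ) else 0)
        ∘ (fun a (j : {x // x ∈ c}) => X j a))
      = (fun ω => if ∃ j ∈ c, X j ω = true then (1:ℝ) else 0) := by
    funext ω
    simp only [Function.comp_apply]
    congr 1
    simp only [eq_iff_iff]
    constructor
    · rintro ⟨⟨j, hj⟩, h⟩; exact ⟨j, hj, h⟩
    · rintro ⟨j, hj, h⟩; exact ⟨⟨j, hj⟩, h⟩
  have e2 : ((fun v : ({x // x ∈ ({i}:Finset ι)} → Bool) =>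
      ψ (v ⟨i, Finset.mem_singleton_self i⟩))
        ∘ (fun a (j : {x // x ∈ ({i}:Finset ι)}) => X j a))
      = (fun ω => ψ (X i ω)) := rfl
  rwa [e1, e2] at hcomp

lemma aux_integrable_bool {i : ι} (hm : Measurable (X i)) (ψ : Bool → ℝ) :
    Integrable (fun ω => ψ (X i ω)) μ :=
  aux_integrable_of_bdd ((Measurable.of_discrete (f := ψ)).comp hm)
    (max |ψ true| |ψ false|)
    (fun ω => by cases h : X i ω <;> simp [h, le_max_left, le_max_right])

/-- covariance with a cluster indicator, case i ∉ c -/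
lemma aux_cov_not_mem (hm : ∀ i, Measurable (X i))
    (hind : iIndepFun X μ)
    {c : Finset ι} {i : ι} (hic : i ∉ c) (pi : ℝ)
    (hpi : (μ {ω | X i ω = true}).toReal = pi) :
    ∫ ω, (if ∃ j ∈ c, X j ω = true then (1:ℝ) else 0)
        * ((if X i ω then 1 else 0) - pi) ∂μ = 0 := by
  have hI := aux_indep_cInd hm hind hic (fun b => (if b then (1:ℝ) else 0) - pi)
  have h2 : ∫ ω, (fun b => (if b then (1:ℝ) else 0) - pi) (X i ω) ∂μ = 0 := by
    rw [aux_int_bool (μ := μ) (hm i) (fun b => (if b then (1:ℝ) else 0) - pi), hpi]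
    norm_num
  have := hI.integral_fun_mul_eq_mul_integral (aux_integrable_cInd hm c).aestronglyMeasurable
    (aux_integrable_bool (μ := μ) (hm i) (fun b => (if b then (1:ℝ) else 0) - pi)).aestronglyMeasurable
  calc ∫ ω, (if ∃ j ∈ c, X j ω = true then (1:ℝ) else 0)
        * ((if X i ω then 1 else 0) - pi) ∂μ
      = (∫ ω, (if ∃ j ∈ c, X j ω = true then (1:ℝ) else 0) ∂μ)
        * ∫ ω, (fun b => (if b then (1:ℝ) else 0) - pi) (X i ω) ∂μ := this
    _ = 0 := by rw [h2, mul_zero]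

/-- covariance with a cluster indicator, case i ∈ c -/
lemma aux_cov_mem (hm : ∀ i, Measurable (X i))
    (hind : iIndepFun X μ)
    {c : Finset ι} {i : ι} (hic : i ∈ c) (pi : ℝ)
    (hpi : (μ {ω | X i ω = true}).toReal = pi) :
    ∫ ω, (if ∃ j ∈ c, X j ω = true then (1:ℝ) else 0)
        * ((if X i ω then 1 else 0) - pi) ∂μ
      = pi * (1 - pi)
          * (1 - ∫ ω, (if ∃ j ∈ c.erase i, X j ω = true then (1:ℝ) else 0) ∂μ) := by
  have hdec : ∀ ω, (if ∃ j ∈ c, X j ω = true then (1:ℝ) else 0)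
      * ((if X i ω then 1 else 0) - pi)
      = (fun b => (if b then (1:ℝ) else 0) * ((if b then 1 else 0) - pi)) (X i ω)
        + ((fun b => (1 - (if b then (1:ℝ) else 0)) * ((if b then 1 else 0) - pi)) (X i ω))
          * (if ∃ j ∈ c.erase i, X j ω = true then (1:ℝ) else 0) := by
    intro ω
    by_cases hb : X i ω
    · have h1 : (∃ j ∈ c, X j ω = true) := ⟨i, hic, hb⟩
      simp only [if_pos hb, if_pos h1]
      ring
    · have h2 : (∃ j ∈ c, X j ω = true) ↔ (∃ j ∈ c.erase i, X j ω = true) := by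
        constructor
        · rintro ⟨j, hj, hXj⟩
          refine ⟨j, Finset.mem_erase.2 ⟨?_, hj⟩, hXj⟩
          rintro rfl; exact hb hXj
        · rintro ⟨j, hj, hXj⟩; exact ⟨j, Finset.mem_of_mem_erase hj, hXj⟩
      simp only [if_neg hb, if_congr h2 rfl rfl]
      ring
  have hint1 : Integrable (fun ω =>
      (fun b => (if b then (1:ℝ) else 0) * ((if b then 1 else 0) - pi)) (X i ω)) μ :=
    aux_integrable_bool (μ := μ) (hm i)
      (fun b => (if b then (1:ℝ) else 0) * ((if b then 1 else 0) - pi))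
  have hint2 : Integrable (fun ω =>
      ((fun b => (1 - (if b then (1:ℝ) else 0)) * ((if b then 1 else 0) - pi)) (X i ω))
        * (if ∃ j ∈ c.erase i, X j ω = true then (1:ℝ) else 0)) μ := by
    refine aux_integrable_of_bdd ?_ ((1 + |pi|) * 1) ?_
    · exact ((Measurable.of_discrete
        (f := fun b => (1 - (if b then (1:ℝ) else 0)) * ((if b then 1 else 0) - pi))).comp
          (hm i)).mul (aux_meas_cInd hm _)
    · intro ω
      rw [abs_mul]
      refine mul_le_mul ?_ ?_ (abs_nonneg _) (by positivity)
      · cases h : X i ω <;> simp [h] <;> linarith [abs_nonneg pi]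
      · split <;> simp
  have hIndep : IndepFun
      (fun ω => if ∃ j ∈ c.erase i, X j ω = true then (1:ℝ) else 0)
      (fun ω => (fun b => (1 - (if b then (1:ℝ) else 0)) * ((if b then 1 else 0) - pi)) (X i ω)) μ :=
    aux_indep_cInd hm hind (Finset.notMem_erase i c)
      (fun b => (1 - (if b then (1:ℝ) else 0)) * ((if b then 1 else 0) - pi))
  have hmul := IndepFun.integral_fun_mul_eq_mul_integral (IndepFun.symm hIndep)
    (aux_integrable_bool (μ := μ) (hm i)
      (fun b => (1 - (if b then (1:ℝ) else 0)) * ((if b then 1 else 0) - pi))).aestronglyMeasurable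
    (aux_integrable_cInd hm _).aestronglyMeasurable
  have e1 : ∫ ω, (fun b => (if b then (1:ℝ) else 0) * ((if b then 1 else 0) - pi)) (X i ω) ∂μ
      = pi * (1 - pi) := by
    rw [aux_int_bool (μ := μ) (hm i)
      (fun b => (if b then (1:ℝ) else 0) * ((if b then 1 else 0) - pi)), hpi]
    norm_num
  have e2 : ∫ ω, (fun b => (1 - (if b then (1:ℝ) else 0)) * ((if b then 1 else 0) - pi)) (X i ω) ∂μ
      = -(pi * (1 - pi)) := by
    rw [aux_int_bool (μ := μ) (hm i)
      (fun b => (1 - (if b then (1:ℝ) else 0)) * ((if b then 1 else 0) - pi)), hpi]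
    norm_num
    ring
  simp_rw [hdec]
  rw [integral_add hint1 hint2]
  have e3 : ∫ ω, ((fun b => (1 - (if b then (1:ℝ) else 0)) * ((if b then 1 else 0) - pi)) (X i ω))
      * (if ∃ j ∈ c.erase i, X j ω = true then (1:ℝ) else 0) ∂μ
      = -(pi * (1 - pi)) * ∫ ω, (if ∃ j ∈ c.erase i, X j ω = true then (1:ℝ) else 0) ∂μ := by
    rw [← e2]; exact hmul
  rw [e1, e3]; ring

lemma aux_int_h {i : ι} (hm : Measurable (X i)) (pi : ℝ)
    (hpi : (μ {ω | X i ω = true}).toReal = pi) :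
    ∫ ω, ((if X i ω then (1:ℝ) else 0) - pi) ∂μ = 0 := by
  show ∫ ω, (fun b => (if b then (1:ℝ) else 0) - pi) (X i ω) ∂μ = 0
  rw [aux_int_bool (μ := μ) hm (fun b => (if b then (1:ℝ) else 0) - pi), hpi]
  norm_num

lemma aux_int_hsq {i : ι} (hm : Measurable (X i)) (pi : ℝ)
    (hpi : (μ {ω | X i ω = true}).toReal = pi) :
    ∫ ω, ((if X i ω then (1:ℝ) else 0) - pi) * ((if X i ω then (1:ℝ) else 0) - pi) ∂μ
      = pi * (1 - pi) := by
  show ∫ ω, (fun b => ((if b then (1:ℝ) else 0) - pi) * ((if b then (1:ℝ) else 0) - pi)) (X i ω) ∂μ = _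
  rw [aux_int_bool (μ := μ) hm
    (fun b => ((if b then (1:ℝ) else 0) - pi) * ((if b then (1:ℝ) else 0) - pi)), hpi]
  norm_num; ring

lemma aux_cross (hm : ∀ i, Measurable (X i))
    (hind : iIndepFun X μ)
    {i j : ι} (hij : i ≠ j) (pi pj : ℝ)
    (hpi : (μ {ω | X i ω = true}).toReal = pi)
    (hpj : (μ {ω | X j ω = true}).toReal = pj) :
    ∫ ω, ((if X i ω then (1:ℝ) else 0) - pi) * ((if X j ω then (1:ℝ) else 0) - pj) ∂μ
      = 0 := by
  have hbase := hind.indepFun hij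
  have hmφ : Measurable (fun b : Bool => (if b then (1:ℝ) else 0) - pi) :=
    Measurable.of_discrete
  have hmψ : Measurable (fun b : Bool => (if b then (1:ℝ) else 0) - pj) :=
    Measurable.of_discrete
  have hI : IndepFun (fun ω => (fun b => (if b then (1:ℝ) else 0) - pi) (X i ω))
      (fun ω => (fun b => (if b then (1:ℝ) else 0) - pj) (X j ω)) μ :=
    hbase.comp hmφ hmψ
  have hmul := hI.integral_fun_mul_eq_mul_integral
    (aux_integrable_bool (μ := μ) (hm i) (fun b => (if b then (1:ℝ) else 0) - pi)).aestronglyMeasurable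
    (aux_integrable_bool (μ := μ) (hm j) (fun b => (if b then (1:ℝ) else 0) - pj)).aestronglyMeasurable
  calc ∫ ω, ((if X i ω then (1:ℝ) else 0) - pi) * ((if X j ω then (1:ℝ) else 0) - pj) ∂μ
      = (∫ ω, ((if X i ω then (1:ℝ) else 0) - pi) ∂μ)
        * ∫ ω, ((if X j ω then (1:ℝ) else 0) - pj) ∂μ := hmul
    _ = 0 := by rw [aux_int_h (hm i) pi hpi, zero_mul]

/-- Generic main estimate:  Var f ≥ ∑_{i∈G} (lam {i})² pᵢ(1-pᵢ). -/
lemma aux_main [Fintype ι] (hm : ∀ i, Measurable (X i))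
    (hind : iIndepFun X μ)
    (p : ι → ℝ) (hp01 : ∀ i, p i ∈ Set.Icc (0:ℝ) 1)
    (hp : ∀ i, (μ {ω | X i ω = true}).toReal = p i)
    (Efam : Finset (Finset ι)) (hsingle : ∀ i : ι, {i} ∈ Efam)
    (lamf : Finset ι → ℝ) (hlam : ∀ c, lamf c ∈ Set.Icc (0:ℝ) 1)
    (G : Finset ι) :
    ∑ i ∈ G, (lamf {i})^2 * (p i * (1 - p i))
      ≤ variance (fun ω => ∑ c ∈ Efam, lamf c
          * (if ∃ i ∈ c, X i ω = true then (1:ℝ) else 0)) μ := by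
  set f : Ω → ℝ := fun ω => ∑ c ∈ Efam, lamf c
      * (if ∃ i ∈ c, X i ω = true then (1:ℝ) else 0) with hf_def
  -- basic properties of f
  have hf_meas : Measurable f :=
    Finset.measurable_sum Efam
      (fun c _ => (aux_meas_cInd hm c).const_mul (lamf c))
  have hf_bdd : ∀ ω, |f ω| ≤ (Efam.card : ℝ) := by
    intro ω
    calc |f ω| ≤ ∑ c ∈ Efam, |lamf c * (if ∃ i ∈ c, X i ω = true then (1:ℝ) else 0)| :=
          Finset.abs_sum_le_sum_abs _ _
      _ ≤ ∑ _c ∈ Efam, (1:ℝ) := by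
          refine Finset.sum_le_sum (fun c _ => ?_)
          rw [abs_mul]
          refine mul_le_one₀ ?_ (abs_nonneg _) ?_
          · rw [abs_of_nonneg (hlam c).1]; exact (hlam c).2
          · split <;> simp
      _ = Efam.card := by simp
  have hf_int : Integrable f μ := aux_integrable_of_bdd hf_meas _ hf_bdd
  have hf_mem2 : MemLp f 2 μ :=
    (memLp_top_of_bound hf_meas.aestronglyMeasurable _
      (Filter.Eventually.of_forall (by simpa [Real.norm_eq_abs] using hf_bdd))).mono_exponent
      le_top
  -- the auxiliary function g
  set g : Ω → ℝ := fun ω => ∑ i ∈ G, lamf {i}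
      * ((if X i ω then (1:ℝ) else 0) - p i) with hg_def
  have hh_meas : ∀ i : ι, Measurable (fun ω => (if X i ω then (1:ℝ) else 0) - p i) :=
    fun i => (aux_meas_sInd (hm i)).sub measurable_const
  have hh_bdd : ∀ (i : ι) ω, |(if X i ω then (1:ℝ) else 0) - p i| ≤ 1 := by
    intro i ω
    have h1 := (hp01 i).1; have h2 := (hp01 i).2
    rw [abs_le]; constructor <;> split <;> [linarith; linarith; linarith; linarith]
  have hh_int : ∀ i : ι, Integrable (fun ω => (if X i ω then (1:ℝ) else 0) - p i) μ :=
    fun i => aux_integrable_of_bdd (hh_meas i) 1 (hh_bdd i)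
  have hg_meas : Measurable g :=
    Finset.measurable_sum G (fun i _ => (hh_meas i).const_mul _)
  have hg_bdd : ∀ ω, |g ω| ≤ (G.card : ℝ) := by
    intro ω
    calc |g ω| ≤ ∑ i ∈ G, |lamf {i} * ((if X i ω then (1:ℝ) else 0) - p i)| :=
          Finset.abs_sum_le_sum_abs _ _
      _ ≤ ∑ _i ∈ G, (1:ℝ) := by
          refine Finset.sum_le_sum (fun i _ => ?_)
          rw [abs_mul]
          refine mul_le_one₀ ?_ (abs_nonneg _) (hh_bdd i ω)
          rw [abs_of_nonneg (hlam _).1]; exact (hlam _).2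
      _ = G.card := by simp
  have hg_int : Integrable g μ := aux_integrable_of_bdd hg_meas _ hg_bdd
  -- expectations
  set m : ℝ := ∫ ω, f ω ∂μ with hm_def
  have hq_nonneg : ∀ i : ι, 0 ≤ p i * (1 - p i) := fun i =>
    mul_nonneg (hp01 i).1 (by linarith [(hp01 i).2])
  -- ∫ g = 0
  have hg_zero : ∫ ω, g ω ∂μ = 0 := by
    rw [hg_def]
    rw [integral_finset_sum G (fun i _ => (hh_int i).const_mul _)]
    refine Finset.sum_eq_zero (fun i _ => ?_)
    rw [integral_const_mul, aux_int_h (hm i) (p i) (hp i), mul_zero]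
  -- ∫ f·hᵢ ≥ lam {i} qᵢ
  have hcov : ∀ i : ι,
      lamf {i} * (p i * (1 - p i)) ≤ ∫ ω, f ω * ((if X i ω then (1:ℝ) else 0) - p i) ∂μ := by
    intro i
    have hpt : ∀ ω, f ω * ((if X i ω then (1:ℝ) else 0) - p i)
        = ∑ c ∈ Efam, lamf c * ((if ∃ j ∈ c, X j ω = true then (1:ℝ) else 0)
            * ((if X i ω then (1:ℝ) else 0) - p i)) := by
      intro ω
      rw [hf_def, Finset.sum_mul]
      exact Finset.sum_congr rfl (fun c _ => by ring)
    have hterm_int : ∀ c ∈ Efam, Integrable (fun ω =>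
        lamf c * ((if ∃ j ∈ c, X j ω = true then (1:ℝ) else 0)
          * ((if X i ω then (1:ℝ) else 0) - p i))) μ := by
      intro c _
      refine Integrable.const_mul ?_ _
      refine aux_integrable_of_bdd ((aux_meas_cInd hm c).mul (hh_meas i)) 1 ?_
      intro ω
      rw [abs_mul]
      refine mul_le_one₀ ?_ (abs_nonneg _) (hh_bdd i ω)
      split <;> simp
    have hint_eq : ∫ ω, f ω * ((if X i ω then (1:ℝ) else 0) - p i) ∂μ
        = ∑ c ∈ Efam, lamf c * ∫ ω, (if ∃ j ∈ c, X j ω = true then (1:ℝ) else 0)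
            * ((if X i ω then (1:ℝ) else 0) - p i) ∂μ := by
      simp_rw [hpt]
      rw [integral_finset_sum Efam hterm_int]
      exact Finset.sum_congr rfl (fun c _ => integral_const_mul _ _)
    rw [hint_eq]
    have hnonneg : ∀ c ∈ Efam,
        0 ≤ lamf c * ∫ ω, (if ∃ j ∈ c, X j ω = true then (1:ℝ) else 0)
            * ((if X i ω then (1:ℝ) else 0) - p i) ∂μ := by
      intro c _
      refine mul_nonneg (hlam c).1 ?_
      by_cases hic : i ∈ c
      · rw [aux_cov_mem hm hind hic (p i) (hp i)]
        refine mul_nonneg (hq_nonneg i) ?_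
        have := (aux_int_cInd_mem_Icc (μ := μ) hm (c.erase i)).2
        linarith
      · rw [aux_cov_not_mem hm hind hic (p i) (hp i)]
    have hsing_val : lamf {i} * ∫ ω, (if ∃ j ∈ ({i} : Finset ι), X j ω = true then (1:ℝ) else 0)
        * ((if X i ω then (1:ℝ) else 0) - p i) ∂μ = lamf {i} * (p i * (1 - p i)) := by
      rw [aux_cov_mem hm hind (Finset.mem_singleton_self i) (p i) (hp i)]
      have herase : ({i} : Finset ι).erase i = ∅ := by simp
      rw [herase]
      norm_num
    calc lamf {i} * (p i * (1 - p i)) = _ := hsing_val.symm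
      _ ≤ ∑ c ∈ Efam, lamf c * ∫ ω, (if ∃ j ∈ c, X j ω = true then (1:ℝ) else 0)
            * ((if X i ω then (1:ℝ) else 0) - p i) ∂μ :=
          Finset.single_le_sum hnonneg (hsingle i)
  -- ∫ f·g ≥ S
  have hfg_int : Integrable (fun ω => f ω * g ω) μ :=
    aux_integrable_of_bdd (hf_meas.mul hg_meas) (Efam.card * G.card)
      (fun ω => by rw [abs_mul]
                   exact mul_le_mul (hf_bdd ω) (hg_bdd ω) (abs_nonneg _) (Nat.cast_nonneg _))
  have hfh_int : ∀ i : ι, Integrable (fun ω => f ω * ((if X i ω then (1:ℝ) else 0) - p i)) μ :=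
    fun i => aux_integrable_of_bdd (hf_meas.mul (hh_meas i)) (Efam.card * 1)
      (fun ω => by rw [abs_mul]
                   exact mul_le_mul (hf_bdd ω) (hh_bdd i ω) (abs_nonneg _) (Nat.cast_nonneg _))
  have hfg_ge : ∑ i ∈ G, (lamf {i})^2 * (p i * (1 - p i)) ≤ ∫ ω, f ω * g ω ∂μ := by
    have hpt : ∀ ω, f ω * g ω = ∑ i ∈ G, lamf {i}
        * (f ω * ((if X i ω then (1:ℝ) else 0) - p i)) := by
      intro ω
      rw [hg_def, Finset.mul_sum]
      exact Finset.sum_congr rfl (fun i _ => by ring)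
    have : ∫ ω, f ω * g ω ∂μ = ∑ i ∈ G, lamf {i}
        * ∫ ω, f ω * ((if X i ω then (1:ℝ) else 0) - p i) ∂μ := by
      simp_rw [hpt]
      rw [integral_finset_sum G (fun i _ => ((hfh_int i).const_mul _))]
      exact Finset.sum_congr rfl (fun i _ => integral_const_mul _ _)
    rw [this]
    refine Finset.sum_le_sum (fun i _ => ?_)
    calc (lamf {i})^2 * (p i * (1 - p i)) = lamf {i} * (lamf {i} * (p i * (1 - p i))) := by ring
      _ ≤ lamf {i} * ∫ ω, f ω * ((if X i ω then (1:ℝ) else 0) - p i) ∂μ :=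
          mul_le_mul_of_nonneg_left (hcov i) (hlam _).1
  -- ∫ g² = S
  have hgg : ∫ ω, g ω * g ω ∂μ = ∑ i ∈ G, (lamf {i})^2 * (p i * (1 - p i)) := by
    have hpt : ∀ ω, g ω * g ω = ∑ i ∈ G, ∑ j ∈ G, (lamf {i} * lamf {j})
        * (((if X i ω then (1:ℝ) else 0) - p i) * ((if X j ω then (1:ℝ) else 0) - p j)) := by
      intro ω
      rw [hg_def, Finset.sum_mul_sum]
      exact Finset.sum_congr rfl (fun i _ => Finset.sum_congr rfl (fun j _ => by ring))
    have hterm_int : ∀ (i j : ι), Integrable (fun ω => (lamf {i} * lamf {j})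
        * (((if X i ω then (1:ℝ) else 0) - p i) * ((if X j ω then (1:ℝ) else 0) - p j))) μ := by
      intro i j
      refine Integrable.const_mul ?_ _
      refine aux_integrable_of_bdd ((hh_meas i).mul (hh_meas j)) 1 ?_
      intro ω
      rw [abs_mul]
      exact mul_le_one₀ (hh_bdd i ω) (abs_nonneg _) (hh_bdd j ω)
    simp_rw [hpt]
    rw [integral_finset_sum G (fun i _ => integrable_finset_sum G (fun j _ => hterm_int i j))]
    refine Finset.sum_congr rfl (fun i hi => ?_)
    rw [integral_finset_sum G (fun j _ => hterm_int i j)]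
    rw [Finset.sum_eq_single_of_mem i hi]
    · rw [integral_const_mul, aux_int_hsq (hm i) (p i) (hp i)]; ring
    · intro j _ hji
      rw [integral_const_mul, aux_cross hm hind (Ne.symm hji) (p i) (p j) (hp i) (hp j), mul_zero]
  -- variance lower bound
  have hvar : variance f μ = ∫ ω, (f ω - m) ^ 2 ∂μ := by
    rw [variance_eq_integral hf_meas.aemeasurable]
  have hsub_meas : Measurable (fun ω => f ω - m) := hf_meas.sub measurable_const
  have hsub_bdd : ∀ ω, |f ω - m| ≤ (Efam.card : ℝ) + |m| := by
    intro ω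
    calc |f ω - m| ≤ |f ω| + |m| := abs_sub _ _
      _ ≤ (Efam.card : ℝ) + |m| := by linarith [hf_bdd ω]
  have hsq_int : Integrable (fun ω => (f ω - m)^2) μ := by
    refine aux_integrable_of_bdd (hsub_meas.pow_const 2) (((Efam.card : ℝ) + |m|)^2) ?_
    intro ω
    rw [abs_pow]
    exact pow_le_pow_left₀ (abs_nonneg _) (hsub_bdd ω) 2
  have hsubg_int : Integrable (fun ω => (f ω - m) * g ω) μ :=
    aux_integrable_of_bdd (hsub_meas.mul hg_meas) (((Efam.card : ℝ) + |m|) * G.card)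
      (fun ω => by rw [abs_mul]
                   exact mul_le_mul (hsub_bdd ω) (hg_bdd ω) (abs_nonneg _)
                     (by positivity))
  have hgsq_int : Integrable (fun ω => g ω * g ω) μ :=
    aux_integrable_of_bdd (hg_meas.mul hg_meas) ((G.card : ℝ) * G.card)
      (fun ω => by rw [abs_mul]
                   exact mul_le_mul (hg_bdd ω) (hg_bdd ω) (abs_nonneg _) (Nat.cast_nonneg _))
  have hexp : ∫ ω, ((f ω - m) - g ω)^2 ∂μ
      = ∫ ω, (f ω - m)^2 ∂μ - 2 * ∫ ω, (f ω - m) * g ω ∂μ + ∫ ω, g ω * g ω ∂μ := by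
    have Isub : Integrable (fun ω => (f ω - m)^2 - 2 * ((f ω - m) * g ω)) μ :=
      hsq_int.sub (hsubg_int.const_mul 2)
    have h2 : (fun ω => ((f ω - m) - g ω)^2)
        = (fun ω => (f ω - m)^2 - 2 * ((f ω - m) * g ω) + g ω * g ω) :=
      funext (fun ω => by ring)
    calc ∫ ω, ((f ω - m) - g ω)^2 ∂μ
        = ∫ ω, ((f ω - m)^2 - 2 * ((f ω - m) * g ω) + g ω * g ω) ∂μ := by rw [h2]
      _ = ∫ ω, ((f ω - m)^2 - 2 * ((f ω - m) * g ω)) ∂μ + ∫ ω, g ω * g ω ∂μ :=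
          integral_add Isub hgsq_int
      _ = (∫ ω, (f ω - m)^2 ∂μ - ∫ ω, 2 * ((f ω - m) * g ω) ∂μ) + ∫ ω, g ω * g ω ∂μ := by
          exact congrArg (fun z => z + ∫ ω, g ω * g ω ∂μ)
            (integral_sub hsq_int (hsubg_int.const_mul 2))
      _ = ∫ ω, (f ω - m)^2 ∂μ - 2 * ∫ ω, (f ω - m) * g ω ∂μ + ∫ ω, g ω * g ω ∂μ := by
          rw [integral_const_mul]
  have hkey : 0 ≤ ∫ ω, ((f ω - m) - g ω)^2 ∂μ :=
    integral_nonneg (fun ω => sq_nonneg _)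
  -- ∫ (f-m)g = ∫ fg
  have hfmg : ∫ ω, (f ω - m) * g ω ∂μ = ∫ ω, f ω * g ω ∂μ := by
    have h2 : (fun ω => (f ω - m) * g ω) = (fun ω => f ω * g ω - m * g ω) :=
      funext (fun ω => by ring)
    calc ∫ ω, (f ω - m) * g ω ∂μ
        = ∫ ω, (f ω * g ω - m * g ω) ∂μ := by rw [h2]
      _ = ∫ ω, f ω * g ω ∂μ - ∫ ω, m * g ω ∂μ :=
          integral_sub hfg_int (hg_int.const_mul m)
      _ = ∫ ω, f ω * g ω ∂μ := by rw [integral_const_mul, hg_zero, mul_zero, sub_zero]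
  rw [hvar]
  have S_def : (0:ℝ) ≤ ∑ i ∈ G, (lamf {i})^2 * (p i * (1 - p i)) :=
    Finset.sum_nonneg (fun i _ => mul_nonneg (sq_nonneg _) (hq_nonneg i))
  have h1 : ∫ ω, (f ω - m)^2 ∂μ
      ≥ 2 * ∫ ω, (f ω - m) * g ω ∂μ - ∫ ω, g ω * g ω ∂μ := by
    have := hkey
    rw [hexp] at this
    linarith
  rw [hfmg] at h1
  rw [hgg] at h1
  linarith [hfg_ge]


end H

/-- Let `(T_n)` be a sequence of rooted phylogenetic trees, the `n`-th
with taxon set `Fin (n+1)`, cluster family `E n` (laminar, containing all singletons: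
these are the pendant edges), edge lengths `lam n c ∈ [0,1]` and survival probabilities
`p n`, and let `φ n` be the future phylogenetic diversity under the g-FOB model.  Assume
(C1): for some `ε > 0`, `A ≥ 0`, `α ≥ 0`, at most `A (n+1)^α` taxa have survival
probability outside `[ε, 1-ε]`; and (C2*): for some `B > 0` and `β`, the sum of squares of
pendant edge lengths is at least `B (n+1)^β`.  Then for every `n`,
`Var[φ n] ≥ ε² (B (n+1)^β - A (n+1)^α)`. -/
theorem variance_future_PD_lower_bound_C1_C2star
    (Ω : ℕ → Type) [∀ n, MeasurableSpace (Ω n)]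
    (μ : ∀ n, Measure (Ω n)) [∀ n, IsProbabilityMeasure (μ n)]
    (surv : ∀ n, Fin (n + 1) → Ω n → Bool)
    (hmeas : ∀ n i, Measurable (surv n i))
    (hindep : ∀ n, iIndepFun (surv n) (μ n))
    (p : ∀ n, Fin (n + 1) → ℝ) (hp01 : ∀ n i, p n i ∈ Set.Icc (0 : ℝ) 1)
    (hp : ∀ n i, ((μ n) {ω | surv n i ω = true}).toReal = p n i)
    (E : ∀ n, Finset (Finset (Fin (n + 1))))
    (hE_ne : ∀ n, ∀ c ∈ E n, c.Nonempty)
    (hE_laminar : ∀ n, ∀ c ∈ E n, ∀ d ∈ E n, c ⊆ d ∨ d ⊆ c ∨ Disjoint c d)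
    (hE_single : ∀ n, ∀ i : Fin (n + 1), {i} ∈ E n)
    (lam : ∀ n, Finset (Fin (n + 1)) → ℝ)
    (hlam : ∀ n c, lam n c ∈ Set.Icc (0 : ℝ) 1)
    (φ : ∀ n, Ω n → ℝ)
    (hφ : ∀ n ω, φ n ω =
      ∑ c ∈ E n, lam n c * (if ∃ i ∈ c, surv n i ω = true then 1 else 0))
    -- condition (C1)
    (ε A α : ℝ) (hε : 0 < ε) (hA : 0 ≤ A) (hα : 0 ≤ α)
    (hC1 : ∀ n,
      ((Finset.univ.filter
          (fun i : Fin (n + 1) => p n i ∉ Set.Icc ε (1 - ε))).card : ℝ)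
        ≤ A * ((n : ℝ) + 1) ^ α)
    -- condition (C2*)
    (B β : ℝ) (hB : 0 < B)
    (hC2star : ∀ n : ℕ,
      B * ((n : ℝ) + 1) ^ β
        ≤ ∑ c ∈ (E n).filter (fun c => c.card = 1), (lam n c) ^ 2) :
    ∀ n : ℕ,
      ε ^ 2 * (B * ((n : ℝ) + 1) ^ β - A * ((n : ℝ) + 1) ^ α)
        ≤ variance (φ n) (μ n) := by
  intro n
  have hφn : φ n = fun ω => ∑ c ∈ E n, lam n c
      * (if ∃ i ∈ c, surv n i ω = true then (1:ℝ) else 0) := funext (hφ n)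
  rw [hφn]
  have key := aux_main (μ := μ n) (hmeas n) (hindep n) (p n) (hp01 n) (hp n)
    (E n) (hE_single n) (lam n) (hlam n)
    (Finset.univ.filter (fun i : Fin (n+1) => p n i ∈ Set.Icc ε (1 - ε)))
  set G : Finset (Fin (n+1)) :=
    Finset.univ.filter (fun i : Fin (n+1) => p n i ∈ Set.Icc ε (1 - ε)) with hG_def
  set t : Fin (n+1) → ℝ := fun i => lam n {i} with ht_def
  have ht01 : ∀ i, 0 ≤ t i ∧ t i ≤ 1 := fun i => ⟨(hlam n {i}).1, (hlam n {i}).2⟩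
  have htsq : ∀ i, t i ^ 2 ≤ 1 := fun i =>
    pow_le_one₀ (ht01 i).1 (ht01 i).2
  -- ε² ∑_G t² ≤ S
  have hS : ε^2 * ∑ i ∈ G, t i ^ 2 ≤ ∑ i ∈ G, t i ^ 2 * (p n i * (1 - p n i)) := by
    rw [Finset.mul_sum]
    refine Finset.sum_le_sum (fun i hi => ?_)
    have hmem : p n i ∈ Set.Icc ε (1 - ε) := (Finset.mem_filter.mp hi).2
    have h1 : ε ≤ p n i := hmem.1
    have h2 : ε ≤ 1 - p n i := by have := hmem.2; linarith
    have h3 : ε * ε ≤ p n i * (1 - p n i) :=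
      mul_le_mul h1 h2 (le_of_lt hε) (hp01 n i).1
    calc ε^2 * t i ^ 2 = t i ^ 2 * (ε * ε) := by ring
      _ ≤ t i ^ 2 * (p n i * (1 - p n i)) :=
          mul_le_mul_of_nonneg_left h3 (sq_nonneg _)
  -- pendant sum identification
  have hpend : ∑ c ∈ (E n).filter (fun c => c.card = 1), (lam n c) ^ 2
      = ∑ i : Fin (n+1), t i ^ 2 := by
    have himg : (E n).filter (fun c => c.card = 1)
        = Finset.univ.image (fun i : Fin (n+1) => ({i} : Finset (Fin (n+1)))) := by
      ext c
      simp only [Finset.mem_filter, Finset.mem_image, Finset.mem_univ, true_and]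
      constructor
      · rintro ⟨hcE, hc1⟩
        obtain ⟨i, rfl⟩ := Finset.card_eq_one.mp hc1
        exact ⟨i, rfl⟩
      · rintro ⟨i, rfl⟩
        exact ⟨hE_single n i, Finset.card_singleton i⟩
    rw [himg, Finset.sum_image (fun i _ j _ h => Finset.singleton_injective h)]
  -- splitting off the bad indices
  have hsplit : ∑ i ∈ G, t i ^ 2
      + ∑ i ∈ Finset.univ.filter (fun i : Fin (n+1) => p n i ∉ Set.Icc ε (1 - ε)), t i ^ 2
      = ∑ i : Fin (n+1), t i ^ 2 :=
    Finset.sum_filter_add_sum_filter_not Finset.univ _ _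
  have hbadsum : ∑ i ∈ Finset.univ.filter
        (fun i : Fin (n+1) => p n i ∉ Set.Icc ε (1 - ε)), t i ^ 2
      ≤ ((Finset.univ.filter
        (fun i : Fin (n+1) => p n i ∉ Set.Icc ε (1 - ε))).card : ℝ) := by
    calc ∑ i ∈ Finset.univ.filter
          (fun i : Fin (n+1) => p n i ∉ Set.Icc ε (1 - ε)), t i ^ 2
        ≤ ∑ _i ∈ Finset.univ.filter
          (fun i : Fin (n+1) => p n i ∉ Set.Icc ε (1 - ε)), (1:ℝ) :=
          Finset.sum_le_sum (fun i _ => htsq i)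
      _ = _ := by simp
  have hC2 := hC2star n
  rw [hpend] at hC2
  have hC1n := hC1 n
  have hε2 : (0:ℝ) ≤ ε^2 := sq_nonneg ε
  have hchain : B * ((n : ℝ) + 1) ^ β - A * ((n : ℝ) + 1) ^ α ≤ ∑ i ∈ G, t i ^ 2 := by
    linarith
  calc ε ^ 2 * (B * ((n : ℝ) + 1) ^ β - A * ((n : ℝ) + 1) ^ α)
      ≤ ε ^ 2 * ∑ i ∈ G, t i ^ 2 := mul_le_mul_of_nonneg_left hchain hε2
    _ ≤ ∑ i ∈ G, t i ^ 2 * (p n i * (1 - p n i)) := hS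
    _ ≤ _ := key
  exact le_of_eq (by congr!)
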